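/- For three points p, q, r on the unit sphere S² in ℝ³, define sgn(p,q,r) as the sign of the determinant of the 3×3 matrix with columns p, q, r. If f : S → S' is an orientation preserving bijection between finite subsets of S² (i.e. sgn(f(p),f(q),f(r)) = sgn(p,q,r) for all triples), S is not contained in any great circle, and {p, -p} ⊆ S is an antipodal pair, then f(-p) = -f(p). -/

import Mathlib

open scoped RealInnerProductSpace

noncomputable section

abbrev E3 := EuclideanSpace ℝ (Fin 3)

/-- Determinant of the 3×3 matrix whose rows are `p`, `q`, `r`. -/
def det3 (p q r : E3) : ℝ := Matrix.det (Matrix.of ![fun i => p i, fun i => q i, fun i => r i])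

/-- The orientation `sgn(p,q,r)` of a triple of points: the sign of `det3 p q r`. -/
def sgn3 (p q r : E3) : ℝ := Real.sign (det3 p q r)

/-- If `f : S → S'` is an orientation preserving bijection between finite
subsets of the unit sphere, `S` is not contained in a great circle, and `{p, -p} ⊆ S`
is an antipodal pair, then `f (-p) = - f p`. -/
lemma det3_formula (p q r : E3) :
    det3 p q r = p 0 * q 1 * r 2 - p 0 * q 2 * r 1 - p 1 * q 0 * r 2
      + p 1 * q 2 * r 0 + p 2 * q 0 * r 1 - p 2 * q 1 * r 0 := by
  simp [det3, Matrix.det_fin_three]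

lemma det3_zero_of_sets (S : Set E3) (hspan : Submodule.span ℝ S = ⊤)
    (h : ∀ q ∈ S, ∀ r ∈ S, ∀ s ∈ S, det3 q r s = 0) : False := by
  have h3 : ∀ q ∈ S, ∀ r ∈ S, ∀ z : E3, det3 q r z = 0 := by
    intro q hq r hr z
    have hz : z ∈ Submodule.span ℝ S := by rw [hspan]; trivial
    induction hz using Submodule.span_induction with
    | mem x hx => exact h q hq r hr x hx
    | zero => simp only [det3_formula, PiLp.zero_apply]; ring
    | add x y hx hy ihx ihy =>
        have : det3 q r (x + y) = det3 q r x + det3 q r y := by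
          simp only [det3_formula, PiLp.add_apply]; ring
        rw [this, ihx, ihy]; ring
    | smul t x hx ih =>
        have : det3 q r (t • x) = t * det3 q r x := by
          simp only [det3_formula, PiLp.smul_apply, smul_eq_mul]; ring
        rw [this, ih]; ring
  have h2 : ∀ q ∈ S, ∀ y z : E3, det3 q y z = 0 := by
    intro q hq y z
    have hy : y ∈ Submodule.span ℝ S := by rw [hspan]; trivial
    induction hy using Submodule.span_induction with
    | mem x hx => exact h3 q hq x hx z
    | zero => simp only [det3_formula, PiLp.zero_apply]; ring
    | add x y' hx hy' ihx ihy =>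
        have : det3 q (x + y') z = det3 q x z + det3 q y' z := by
          simp only [det3_formula, PiLp.add_apply]; ring
        rw [this, ihx, ihy]; ring
    | smul t x hx ih =>
        have : det3 q (t • x) z = t * det3 q x z := by
          simp only [det3_formula, PiLp.smul_apply, smul_eq_mul]; ring
        rw [this, ih]; ring
  have h1 : ∀ x y z : E3, det3 x y z = 0 := by
    intro x y z
    have hx : x ∈ Submodule.span ℝ S := by rw [hspan]; trivial
    induction hx using Submodule.span_induction with
    | mem w hw => exact h2 w hw y z
    | zero => simp only [det3_formula, PiLp.zero_apply]; ring
    | add w w' hw hw' ihw ihw' =>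
        have : det3 (w + w') y z = det3 w y z + det3 w' y z := by
          simp only [det3_formula, PiLp.add_apply]; ring
        rw [this, ihw, ihw']; ring
    | smul t w hw ih =>
        have : det3 (t • w) y z = t * det3 w y z := by
          simp only [det3_formula, PiLp.smul_apply, smul_eq_mul]; ring
        rw [this, ih]; ring
  have := h1 (EuclideanSpace.single 0 1) (EuclideanSpace.single 1 1) (EuclideanSpace.single 2 1)
  rw [det3_formula] at this
  simp [EuclideanSpace.single_apply] at this

theorem stmt0 (S S' : Set E3) (hSfin : S.Finite) (hS'fin : S'.Finite)
    (hSsph : S ⊆ Metric.sphere (0 : E3) 1) (hS'sph : S' ⊆ Metric.sphere (0 : E3) 1)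
    (f : E3 → E3) (hbij : Set.BijOn f S S')
    (hpres : ∀ p ∈ S, ∀ q ∈ S, ∀ r ∈ S, sgn3 (f p) (f q) (f r) = sgn3 p q r)
    (hngc : ¬ ∃ v : E3, v ≠ 0 ∧ ∀ p ∈ S, ⟪v, p⟫ = (0 : ℝ))
    (p : E3) (hp : p ∈ S) (hnp : -p ∈ S) :
    f (-p) = -(f p) := by
  set a := f p with ha
  set b := f (-p) with hb
  have hA : ∀ r ∈ S, det3 a b (f r) = 0 := by
    intro r hr
    have h := hpres p hp (-p) hnp r hr
    have h0 : det3 p (-p) r = 0 := by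
      rw [det3_formula]; simp only [PiLp.neg_apply]; ring
    rw [sgn3, sgn3, h0, Real.sign_zero] at h
    exact Real.sign_eq_zero_iff.mp h
  have hspan : Submodule.span ℝ S = ⊤ := by
    by_contra hne
    rw [← Submodule.orthogonal_eq_bot_iff, ← ne_eq, Submodule.ne_bot_iff] at hne
    obtain ⟨v, hv, hv0⟩ := hne
    exact hngc ⟨v, hv0, fun q hq => by
      rw [real_inner_comm]
      exact (Submodule.mem_orthogonal _ _).mp hv q (Submodule.subset_span hq)⟩
  set c : Fin 3 → ℝ := ![a 1 * b 2 - a 2 * b 1, a 2 * b 0 - a 0 * b 2, a 0 * b 1 - a 1 * b 0]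
    with hc
  have htriple : ∃ q ∈ S, ∃ r ∈ S, ∃ s ∈ S, det3 q r s ≠ 0 := by
    by_contra hno
    push_neg at hno
    exact det3_zero_of_sets S hspan hno
  obtain ⟨q, hq, r, hr, s, hs, hdet⟩ := htriple
  have hdet' : det3 (f q) (f r) (f s) ≠ 0 := by
    intro h0
    apply hdet
    have := hpres q hq r hr s hs
    rw [sgn3, sgn3, h0, Real.sign_zero] at this
    exact Real.sign_eq_zero_iff.mp this.symm
  set M : Matrix (Fin 3) (Fin 3) ℝ :=
    Matrix.of ![fun i => f q i, fun i => f r i, fun i => f s i] with hM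
  have hMdet : M.det ≠ 0 := hdet'
  have hrow : ∀ u, u ∈ S → det3 a b (f u) = 0 → dotProduct (fun j => f u j) c = 0 := by
    intro u hu h
    rw [det3_formula] at h
    simp only [hc, dotProduct, Fin.sum_univ_three, Matrix.cons_val_zero,
      Matrix.cons_val_one, Matrix.head_cons, Matrix.cons_val_two, Matrix.tail_cons]
    linear_combination h
  have hMc : M.mulVec c = 0 := by
    have h0 : M.mulVec c 0 = 0 := by
      show dotProduct (fun j => f q j) c = 0
      exact hrow q hq (hA q hq)
    have h1 : M.mulVec c 1 = 0 := by
      show dotProduct (fun j => f r j) c = 0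
      exact hrow r hr (hA r hr)
    have h2 : M.mulVec c 2 = 0 := by
      show dotProduct (fun j => f s j) c = 0
      exact hrow s hs (hA s hs)
    funext i
    fin_cases i
    · exact h0
    · exact h1
    · exact h2
  have hc0 : c = 0 := by
    have hu : IsUnit M.det := isUnit_iff_ne_zero.mpr hMdet
    calc c = (1 : Matrix (Fin 3) (Fin 3) ℝ).mulVec c := by rw [Matrix.one_mulVec]
    _ = (M⁻¹ * M).mulVec c := by rw [Matrix.nonsing_inv_mul M hu]
    _ = M⁻¹.mulVec (M.mulVec c) := by rw [Matrix.mulVec_mulVec]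
    _ = 0 := by rw [hMc, Matrix.mulVec_zero]
  have e0 : a 1 * b 2 - a 2 * b 1 = 0 := by
    have := congrFun hc0 0; simpa [hc] using this
  have e1 : a 2 * b 0 - a 0 * b 2 = 0 := by
    have := congrFun hc0 1; simpa [hc] using this
  have e2 : a 0 * b 1 - a 1 * b 0 = 0 := by
    have := congrFun hc0 2; simpa [hc] using this
  have haS' : a ∈ S' := hbij.mapsTo hp
  have hbS' : b ∈ S' := hbij.mapsTo hnp
  have hna : a 0 * a 0 + a 1 * a 1 + a 2 * a 2 = 1 := by
    have hn : ‖a‖ = 1 := by simpa using hS'sph haS'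
    have h2 : ⟪a, a⟫ = (1:ℝ) := by rw [real_inner_self_eq_norm_sq, hn]; norm_num
    simp only [PiLp.inner_apply, Fin.sum_univ_three, RCLike.inner_apply, conj_trivial] at h2
    linear_combination h2
  have hnb : b 0 * b 0 + b 1 * b 1 + b 2 * b 2 = 1 := by
    have hn : ‖b‖ = 1 := by simpa using hS'sph hbS'
    have h2 : ⟪b, b⟫ = (1:ℝ) := by rw [real_inner_self_eq_norm_sq, hn]; norm_num
    simp only [PiLp.inner_apply, Fin.sum_univ_three, RCLike.inner_apply, conj_trivial] at h2
    linear_combination h2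
  set t : ℝ := a 0 * b 0 + a 1 * b 1 + a 2 * b 2 with ht
  have hb0 : b 0 = t * a 0 := by linear_combination (-(b 0)) * hna + a 2 * e1 - a 1 * e2
  have hb1 : b 1 = t * a 1 := by linear_combination (-(b 1)) * hna + a 0 * e2 - a 2 * e0
  have hb2 : b 2 = t * a 2 := by linear_combination (-(b 2)) * hna - a 0 * e1 + a 1 * e0
  have ht2 : t * t = 1 := by
    have h' := hnb
    rw [hb0, hb1, hb2] at h'
    linear_combination h' - t * t * hna
  rcases mul_self_eq_one_iff.mp ht2 with h | h
  · exfalso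
    have hab : b = a := by
      ext i
      fin_cases i
      · show b 0 = a 0; rw [hb0, h, one_mul]
      · show b 1 = a 1; rw [hb1, h, one_mul]
      · show b 2 = a 2; rw [hb2, h, one_mul]
    have heq : -p = p := hbij.injOn hnp hp hab
    have h2 : (2:ℝ) • p = 0 := by
      rw [two_smul]
      calc p + p = -p + p := by rw [heq]
      _ = 0 := neg_add_cancel p
    have hp0 : p = (0 : E3) := by
      rcases smul_eq_zero.mp h2 with h' | h'
      · norm_num at h'
      · exact h'
    have := hSsph hp
    rw [hp0] at this
    simp at this
  · ext i
    fin_cases i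
    · show b 0 = -(a 0); rw [hb0, h]; ring
    · show b 1 = -(a 1); rw [hb1, h]; ring
    · show b 2 = -(a 2); rw [hb2, h]; ring
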